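/- Let n = 2, k ∈ ℕ with k ≥ 1, p ∈ ℤ with |p/k| ≤ 1, and let l₀, …, l_{k−1} ⊂ 𝕋² be the parallel closed geodesics lᵢ = {(x, (p/k)x + i/k mod 1) : x ∈ [0,1)}. Let Leb denote Lebesgue (Haar) probability measure on 𝕋², and μ_k := (1/k) Σᵢ (normalized arc-length measure on lᵢ). Then W₁(Leb, μ_k) ≥ c/k for a constant c > 0 independent of k and p (one may take c = 1/16). -/

import Mathlib

open MeasureTheory
open scoped ENNReal

/-- The 1-Wasserstein-type transport cost between two measures on `X` with respect to
a cost function `c`, defined as the infimum over couplings. -/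
noncomputable def transportCost {X : Type*} [MeasurableSpace X]
    (c : X → X → ℝ) (μ ν : Measure X) : ℝ :=
  sInf {r : ℝ | ∃ π : Measure (X × X),
    π.map Prod.fst = μ ∧ π.map Prod.snd = ν ∧ r = ∫ p, c p.1 p.2 ∂π}

/-- The flat (Euclidean) distance on the 2-torus `𝕋² = (ℝ/ℤ) × (ℝ/ℤ)`. -/
noncomputable def flatDist2
    (p q : AddCircle (1 : ℝ) × AddCircle (1 : ℝ)) : ℝ :=
  Real.sqrt ((dist p.1 q.1) ^ 2 + (dist p.2 q.2) ^ 2)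


noncomputable def psiFun (k : ℕ) (p : ℤ) (q : AddCircle (1 : ℝ) × AddCircle (1 : ℝ)) : ℝ :=
  (1 / (4 * (k : ℝ))) * ‖(k : ℤ) • q.2 - p • q.1‖

lemma psiFun_continuous (k : ℕ) (p : ℤ) : Continuous (psiFun k p) := by
  apply Continuous.mul continuous_const
  exact (((continuous_zsmul (k:ℤ)).comp continuous_snd).sub
    ((continuous_zsmul p).comp continuous_fst)).norm

lemma psiFun_nonneg (k : ℕ) (p : ℤ) (q) : 0 ≤ psiFun k p q :=
  mul_nonneg (by positivity) (norm_nonneg _)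

lemma psiFun_lip (k : ℕ) (hk : 1 ≤ k) (p : ℤ) (hp : |(p:ℝ)| ≤ (k:ℝ))
    (a b : AddCircle (1 : ℝ) × AddCircle (1 : ℝ)) :
    psiFun k p a - psiFun k p b ≤ flatDist2 a b := by
  have hk0 : (0:ℝ) < k := by exact_mod_cast hk
  have h1 : psiFun k p a - psiFun k p b
      ≤ (1 / (4 * (k : ℝ))) * ‖((k : ℤ) • a.2 - p • a.1) - ((k : ℤ) • b.2 - p • b.1)‖ := by
    rw [psiFun, psiFun, ← mul_sub]
    exact mul_le_mul_of_nonneg_left (norm_sub_norm_le _ _) (by positivity)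
  have h2 : ((k : ℤ) • a.2 - p • a.1) - ((k : ℤ) • b.2 - p • b.1)
      = (k : ℤ) • (a.2 - b.2) - p • (a.1 - b.1) := by
    simp [smul_sub]; abel
  have h3 : ‖(k : ℤ) • (a.2 - b.2) - p • (a.1 - b.1)‖
      ≤ (k:ℝ) * ‖a.2 - b.2‖ + (k:ℝ) * ‖a.1 - b.1‖ := by
    refine (norm_sub_le _ _).trans (add_le_add ?_ ?_)
    · refine (norm_zsmul_le _ _).trans ?_
      have : ‖(k:ℤ)‖ = (k:ℝ) := by simp [Int.norm_eq_abs]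
      rw [this]
    · refine (norm_zsmul_le _ _).trans ?_
      have : ‖p‖ ≤ (k:ℝ) := by simpa [Int.norm_eq_abs] using hp
      exact mul_le_mul_of_nonneg_right this (norm_nonneg _)
  have hd1 : ‖a.1 - b.1‖ = dist a.1 b.1 := (dist_eq_norm _ _).symm
  have hd2 : ‖a.2 - b.2‖ = dist a.2 b.2 := (dist_eq_norm _ _).symm
  have key : psiFun k p a - psiFun k p b ≤ (dist a.1 b.1 + dist a.2 b.2) / 4 := by
    refine h1.trans ?_
    rw [h2]
    calc (1 / (4 * (k : ℝ))) * ‖(k : ℤ) • (a.2 - b.2) - p • (a.1 - b.1)‖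
        ≤ (1 / (4 * (k : ℝ))) * ((k:ℝ) * ‖a.2 - b.2‖ + (k:ℝ) * ‖a.1 - b.1‖) :=
          mul_le_mul_of_nonneg_left h3 (by positivity)
      _ = (dist a.1 b.1 + dist a.2 b.2) / 4 := by
          rw [hd1, hd2]; field_simp; ring
  refine key.trans ?_
  have s1 : dist a.1 b.1 ≤ flatDist2 a b := by
    rw [flatDist2]
    calc dist a.1 b.1 = Real.sqrt ((dist a.1 b.1)^2) := by
          rw [Real.sqrt_sq dist_nonneg]
      _ ≤ _ := Real.sqrt_le_sqrt (le_add_of_nonneg_right (sq_nonneg _))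
  have s2 : dist a.2 b.2 ≤ flatDist2 a b := by
    rw [flatDist2]
    calc dist a.2 b.2 = Real.sqrt ((dist a.2 b.2)^2) := by
          rw [Real.sqrt_sq dist_nonneg]
      _ ≤ _ := Real.sqrt_le_sqrt (le_add_of_nonneg_left (sq_nonneg _))
  have s0 : 0 ≤ flatDist2 a b := Real.sqrt_nonneg _
  linarith

lemma psiFun_line (k : ℕ) (hk : 1 ≤ k) (p : ℤ) (i : ℕ) (x : ℝ) :
    psiFun k p ((x : AddCircle (1:ℝ)),
      ((((p:ℝ)/(k:ℝ)) * x + (i:ℝ)/(k:ℝ) : ℝ) : AddCircle (1:ℝ))) = 0 := by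
  have hk0 : (k:ℝ) ≠ 0 := by positivity
  rw [psiFun]
  convert mul_zero _
  rw [norm_eq_zero]
  have e1 : ((k:ℤ) • ((((p:ℝ)/(k:ℝ)) * x + (i:ℝ)/(k:ℝ) : ℝ) : AddCircle (1:ℝ)))
      = (((p:ℝ) * x + (i:ℝ) : ℝ) : AddCircle (1:ℝ)) := by
    rw [← AddCircle.coe_zsmul]
    congr 1
    push_cast
    field_simp
    simp only [zsmul_eq_mul, nsmul_eq_mul]
    push_cast
    field_simp
  have e2 : (p • ((x:ℝ) : AddCircle (1:ℝ))) = (((p:ℝ) * x : ℝ) : AddCircle (1:ℝ)) := by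
    rw [← AddCircle.coe_zsmul]
    congr 1
    simp [zsmul_eq_mul]
  rw [e1, e2, ← AddCircle.coe_sub]
  have : (p:ℝ) * x + (i:ℝ) - (p:ℝ) * x = (i:ℝ) := by ring
  rw [this, AddCircle.coe_eq_zero_iff]
  exact ⟨i, by push_cast; simp⟩

lemma abs_int_eq : (∫ x in (-(1/2) : ℝ)..(1/2), |x|) = 1/4 := by
  have h1 : (∫ x in (-(1/2) : ℝ)..(0:ℝ), |x|) = 1/8 := by
    have : ∀ x ∈ Set.uIcc (-(1/2):ℝ) 0, |x| = -x := by
      intro x hx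
      rw [Set.uIcc_of_le (by norm_num)] at hx
      rw [abs_of_nonpos hx.2]
    rw [intervalIntegral.integral_congr this, intervalIntegral.integral_neg,
      integral_id]
    norm_num
  have h2 : (∫ x in (0:ℝ)..(1/2), |x|) = 1/8 := by
    have : ∀ x ∈ Set.uIcc (0:ℝ) (1/2), |x| = x := by
      intro x hx
      rw [Set.uIcc_of_le (by norm_num)] at hx
      rw [abs_of_nonneg hx.1]
    rw [intervalIntegral.integral_congr this, integral_id]
    norm_num
  have := intervalIntegral.integral_add_adjacent_intervals
    (a := (-(1/2):ℝ)) (b := 0) (c := 1/2) (f := fun x => |x|) (μ := volume)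
    (continuous_abs.intervalIntegrable _ _) (continuous_abs.intervalIntegrable _ _)
  rw [h1, h2] at this
  rw [← this]; norm_num

lemma norm_coe_eq_abs {a : ℝ} (ha : a ∈ Set.Ioc (-(1/2):ℝ) (-(1/2)+1)) :
    ‖(a : AddCircle (1:ℝ))‖ = |a| := by
  rw [AddCircle.norm_eq]
  norm_num
  rcases lt_or_ge a (1/2) with h | h
  · have : round a = 0 := by
      rw [round_eq, Int.floor_eq_zero_iff]
      constructor
      · norm_num at ha; linarith [ha.1]
      · norm_num; linarith
    rw [this]; norm_num
  · have ha2 : a = 1/2 := by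
      norm_num at ha; linarith [ha.2]
    subst ha2
    have : round ((1:ℝ)/2) = 1 := by
      rw [round_eq]; norm_num
    rw [this]; norm_num

lemma norm_integral_addCircle : (∫ y : AddCircle (1:ℝ), ‖y‖) = 1/4 := by
  rw [← AddCircle.integral_preimage (1:ℝ) (-(1/2)) (fun y : AddCircle (1:ℝ) => ‖y‖)]
  rw [MeasureTheory.setIntegral_congr_fun measurableSet_Ioc
    (fun a ha => norm_coe_eq_abs ha)]
  rw [← intervalIntegral.integral_of_le (by norm_num)]
  have : (-(1/2) + 1 : ℝ) = 1/2 := by norm_num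
  rw [this, abs_int_eq]

lemma inner_integral (k : ℕ) (hk : 1 ≤ k) (c : AddCircle (1:ℝ)) :
    (∫ y : AddCircle (1:ℝ), ‖(k:ℤ) • y - c‖) = 1/4 := by
  have hkz : (k:ℤ) ≠ 0 := by positivity
  have hmp := MeasureTheory.Measure.measurePreserving_zsmul
    (volume : Measure (AddCircle (1:ℝ))) hkz
  have h1 : (∫ y : AddCircle (1:ℝ), ‖(k:ℤ) • y - c‖)
      = ∫ z : AddCircle (1:ℝ), ‖z - c‖ := by
    have hF : Continuous (fun z : AddCircle (1:ℝ) => ‖z - c‖) := by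
      fun_prop
    conv_rhs => rw [← hmp.map_eq]
    rw [integral_map hmp.measurable.aemeasurable hF.aestronglyMeasurable]
  rw [h1]
  rw [MeasureTheory.integral_sub_right_eq_self (fun z : AddCircle (1:ℝ) => ‖z‖) c]
  exact norm_integral_addCircle

lemma integral_psi (k : ℕ) (hk : 1 ≤ k) (p : ℤ) :
    (∫ q, psiFun k p q ∂(volume : Measure (AddCircle (1:ℝ) × AddCircle (1:ℝ))))
      = 1 / (16 * (k:ℝ)) := by
  have hint : Integrable (psiFun k p)
      (volume : Measure (AddCircle (1:ℝ) × AddCircle (1:ℝ))) :=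
    (psiFun_continuous k p).integrable_of_hasCompactSupport
      (HasCompactSupport.of_compactSpace _)
  rw [MeasureTheory.Measure.volume_eq_prod] at hint ⊢
  rw [MeasureTheory.integral_prod _ hint]
  have hinner : ∀ x : AddCircle (1:ℝ),
      (∫ y : AddCircle (1:ℝ), psiFun k p (x, y)) = 1 / (16 * (k:ℝ)) := by
    intro x
    simp only [psiFun]
    rw [MeasureTheory.integral_const_mul, inner_integral k hk (p • x)]
    have hk0 : (k:ℝ) ≠ 0 := by positivity
    field_simp
    ring
  simp_rw [hinner]
  rw [MeasureTheory.integral_const]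
  simp [AddCircle.measure_univ]
  rw [measureReal_def]
  simp [AddCircle.measure_univ]

instance borelT2 : BorelSpace (AddCircle (1:ℝ) × AddCircle (1:ℝ)) := Prod.borelSpace

instance borelT2T2 : BorelSpace ((AddCircle (1:ℝ) × AddCircle (1:ℝ)) × (AddCircle (1:ℝ) × AddCircle (1:ℝ))) :=
  Prod.borelSpace


/-- Lower bound for the 1-Wasserstein distance (flat metric on `𝕋²`) between Haar
probability measure on `𝕋²` and the uniform measure `μ_k` on the union of the `k`
parallel closed geodesics `lᵢ = {(x, (p/k)x + i/k) : x ∈ [0,1)}`: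
`W₁(Leb, μ_k) ≥ 1/(16 k)`, for all `k ≥ 1` and all `p ∈ ℤ` with `|p| ≤ k`. -/
theorem wasserstein_lower_bound_lines (k : ℕ) (hk : 1 ≤ k) (p : ℤ)
    (hp : |(p : ℝ) / (k : ℝ)| ≤ 1) :
    (1 : ℝ) / (16 * (k : ℝ)) ≤
      transportCost flatDist2
        (volume : Measure (AddCircle (1 : ℝ) × AddCircle (1 : ℝ)))
        (((k : ℝ≥0∞))⁻¹ • ∑ i ∈ Finset.range k,
          Measure.map
            (fun x : ℝ =>
              ((x : AddCircle (1 : ℝ)),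
                ((((p : ℝ) / (k : ℝ)) * x + (i : ℝ) / (k : ℝ) : ℝ) :
                  AddCircle (1 : ℝ))))
            (volume.restrict (Set.Ico (0 : ℝ) 1))) := by
  classical
  have hk0 : (0:ℝ) < (k:ℝ) := by exact_mod_cast hk
  have hpk : |(p:ℝ)| ≤ (k:ℝ) := by
    have h1 : |(p:ℝ)| = |(p:ℝ)/(k:ℝ)| * (k:ℝ) := by
      rw [abs_div, abs_of_pos hk0]; field_simp
    rw [h1]
    nlinarith [abs_nonneg ((p:ℝ)/(k:ℝ))]
  set T2 := AddCircle (1:ℝ) × AddCircle (1:ℝ)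
  set f : ℕ → ℝ → T2 := fun i x =>
    ((x : AddCircle (1 : ℝ)),
      ((((p : ℝ) / (k : ℝ)) * x + (i : ℝ) / (k : ℝ) : ℝ) : AddCircle (1 : ℝ)))
  have hfc : ∀ i : ℕ, Continuous (f i) := by
    intro i
    apply Continuous.prodMk
    · exact AddCircle.continuous_mk' 1
    · exact (AddCircle.continuous_mk' 1).comp (by continuity)
  set ν : Measure T2 := ((k : ℝ≥0∞))⁻¹ • ∑ i ∈ Finset.range k,
      Measure.map (f i) (volume.restrict (Set.Ico (0 : ℝ) 1)) with hν
  -- volume on T2 is a probability measure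
  have hvol : (volume : Measure T2) Set.univ = 1 := by
    rw [MeasureTheory.Measure.volume_eq_prod, ← Set.univ_prod_univ,
      MeasureTheory.Measure.prod_prod]
    simp [AddCircle.measure_univ]
  have hνuniv : ν Set.univ = 1 := by
    rw [hν, Measure.smul_apply, Measure.finset_sum_apply]
    have : ∀ i ∈ Finset.range k,
        (Measure.map (f i) (volume.restrict (Set.Ico (0:ℝ) 1))) Set.univ = 1 := by
      intro i _
      rw [Measure.map_apply (hfc i).measurable MeasurableSet.univ]
      simp
    rw [Finset.sum_congr rfl this]
    simp
    rw [ENNReal.inv_mul_cancel (by simp; omega) (by simp)]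
  -- ψ vanishes ν-a.e.
  have hψν : psiFun k p =ᵐ[ν] 0 := by
    rw [Filter.EventuallyEq, ae_iff]
    have hS : MeasurableSet {z : T2 | ¬ psiFun k p z = (0 : T2 → ℝ) z} := by
      simp only [Pi.zero_apply]
      exact measurableSet_preimage (psiFun_continuous k p).measurable
        (measurableSet_singleton (0:ℝ)).compl
    rw [hν, Measure.smul_apply, Measure.finset_sum_apply]
    have : ∀ i ∈ Finset.range k,
        (Measure.map (f i) (volume.restrict (Set.Ico (0:ℝ) 1)))
          {z : T2 | ¬ psiFun k p z = (0 : T2 → ℝ) z} = 0 := by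
      intro i _
      rw [Measure.map_apply (hfc i).measurable hS]
      have hemp : (f i) ⁻¹' {z : T2 | ¬ psiFun k p z = (0 : T2 → ℝ) z} = ∅ := by
        ext x
        simp only [Set.mem_preimage, Set.mem_setOf_eq, Set.mem_empty_iff_false, iff_false,
          not_not, Pi.zero_apply]
        exact psiFun_line k hk p i x
      rw [hemp]
      exact measure_empty
    rw [Finset.sum_congr rfl this]
    simp
  have hψνint : (∫ z, psiFun k p z ∂ν) = 0 := integral_eq_zero_of_ae hψν
  -- nonempty coupling set
  have hνfin : IsFiniteMeasure ν := ⟨by rw [hνuniv]; exact ENNReal.one_lt_top⟩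
  have hvolfin : IsFiniteMeasure (volume : Measure T2) :=
    ⟨by rw [hvol]; exact ENNReal.one_lt_top⟩
  apply le_csInf
  · refine ⟨∫ z, flatDist2 z.1 z.2 ∂((volume : Measure T2).prod ν),
      (volume : Measure T2).prod ν, ?_, ?_, rfl⟩
    · rw [Measure.map_fst_prod, hνuniv, one_smul]
    · rw [Measure.map_snd_prod, hvol, one_smul]
  · rintro r ⟨π, hπ1, hπ2, rfl⟩
    have hπuniv : π Set.univ = 1 := by
      have := congrArg (fun m : Measure T2 => m Set.univ) hπ1
      simpa [Measure.map_apply measurable_fst MeasurableSet.univ, hvol] using this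
    have hπfin : IsFiniteMeasure π := ⟨by rw [hπuniv]; exact ENNReal.one_lt_top⟩
    have hcostc : Continuous (fun z : T2 × T2 => flatDist2 z.1 z.2) := by
      unfold flatDist2
      exact Real.continuous_sqrt.comp (((continuous_dist.comp ((continuous_fst.comp continuous_fst).prodMk (continuous_fst.comp continuous_snd))).pow 2).add ((continuous_dist.comp ((continuous_snd.comp continuous_fst).prodMk (continuous_snd.comp continuous_snd))).pow 2))
    have hcost_int : Integrable (fun z : T2 × T2 => flatDist2 z.1 z.2) π :=
      hcostc.integrable_of_hasCompactSupport (HasCompactSupport.of_compactSpace _)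
    have hfst_int : Integrable (fun z : T2 × T2 => psiFun k p z.1) π :=
      ((psiFun_continuous k p).comp continuous_fst).integrable_of_hasCompactSupport
        (HasCompactSupport.of_compactSpace _)
    have hsnd_int : Integrable (fun z : T2 × T2 => psiFun k p z.2) π :=
      ((psiFun_continuous k p).comp continuous_snd).integrable_of_hasCompactSupport
        (HasCompactSupport.of_compactSpace _)
    have hmono : (∫ z, (psiFun k p z.1 - psiFun k p z.2) ∂π)
        ≤ ∫ z, flatDist2 z.1 z.2 ∂π := by
      refine integral_mono (hfst_int.sub hsnd_int) hcost_int ?_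
      intro z
      exact psiFun_lip k hk p hpk z.1 z.2
    have hfst : (∫ z, psiFun k p z.1 ∂π)
        = ∫ q, psiFun k p q ∂(volume : Measure T2) := by
      rw [← hπ1, integral_map measurable_fst.aemeasurable
        (psiFun_continuous k p).aestronglyMeasurable]
    have hsnd : (∫ z, psiFun k p z.2 ∂π) = 0 := by
      rw [← hψνint, ← hπ2, integral_map measurable_snd.aemeasurable
        (psiFun_continuous k p).aestronglyMeasurable]
    rw [integral_sub hfst_int hsnd_int, hfst, hsnd, sub_zero,
      integral_psi k hk p] at hmono
    exact hmono
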